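/- Let ω, q, p, p₀, h be real numbers with p₀ ≠ 0, ω·q ≠ 0, h > 0 and h² = p² + ω²q². Let μ^i_{jk} be the anti-commutative structure constants μ³₁₂ = 1, μ¹₂₃ = μ²₁₃ = −(2ω/p₀)·q, μ¹₃₁ = μ²₂₃ = (2/p₀)·p (all other independent components zero), and let ν^i_{jk} be the structure constants of sl(2): ν³₁₂ = 1, ν¹₃₁ = 2, ν²₂₃ = 2 (all other independent components zero). Define the 3×3 matrix A with entries A^i_j by A = (1/(2p₀))·[[(2p₀/(ωq))·(p + h), 2p₀, 0], [p − h, ωq, 0], [0, 0, 2h]]. Then A is invertible and Σ_s μ^s_{jk}·A^i_s = Σ_{l,m} ν^i_{lm}·A^l_j·A^m_k for all i, j, k ∈ {1,2,3}; hence the dynamically deformed algebra with multiplication μ is a Lie algebra isomorphic to sl(2). -/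

import Mathlib

/-- The deformed `sl(2)` structure constants: `μ³₁₂ = 1`,
`μ¹₂₃ = μ²₁₃ = −(2ω/p₀)·q`, `μ¹₃₁ = μ²₂₃ = (2/p₀)·p`, antisymmetric in the
lower indices, all other components zero (indices `1,2,3` correspond to
`0,1,2`). -/
noncomputable def μDef (ω q p p₀ : ℝ) : Fin 3 → Fin 3 → Fin 3 → ℝ :=
  ![![![0, 0, -((2 / p₀) * p)],
      ![0, 0, -(2 * ω / p₀) * q],
      ![(2 / p₀) * p, (2 * ω / p₀) * q, 0]],
    ![![0, 0, -(2 * ω / p₀) * q],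
      ![0, 0, (2 / p₀) * p],
      ![(2 * ω / p₀) * q, -((2 / p₀) * p), 0]],
    ![![0, 1, 0], ![-1, 0, 0], ![0, 0, 0]]]

/-- Structure constants of `sl(2)`: `ν³₁₂ = 1`, `ν¹₃₁ = 2`, `ν²₂₃ = 2`,
antisymmetric in the lower indices, all other components zero. -/
def sl2ν : Fin 3 → Fin 3 → Fin 3 → ℝ :=
  ![![![0, 0, -2], ![0, 0, 0], ![2, 0, 0]],
    ![![0, 0, 0], ![0, 0, 2], ![0, -2, 0]],
    ![![0, 1, 0], ![-1, 0, 0], ![0, 0, 0]]]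

/-- The matrix `A = (1/(2p₀))·[[(2p₀/(ωq))(p+h), 2p₀, 0],[p−h, ωq, 0],[0,0,2h]]`. -/
noncomputable def Aiso (ω q p p₀ h : ℝ) : Matrix (Fin 3) (Fin 3) ℝ :=
  (1 / (2 * p₀)) •
    !![(2 * p₀ / (ω * q)) * (p + h), 2 * p₀, 0;
       p - h, ω * q, 0;
       0, 0, 2 * h]

set_option maxHeartbeats 4000000 in
/-- The dynamically deformed algebra is isomorphic to `sl(2)`: the matrix `A`
is invertible and satisfies `Σ_s μ^s_{jk}·A^i_s = Σ_{l,m} ν^i_{lm}·A^l_j·A^m_k`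
for all `i, j, k`. -/
theorem deformed_sl2_isomorphic_sl2 (ω q p p₀ h : ℝ)
    (hp₀ : p₀ ≠ 0) (hωq : ω * q ≠ 0) (hh : 0 < h)
    (hh2 : h ^ 2 = p ^ 2 + ω ^ 2 * q ^ 2) :
    IsUnit (Aiso ω q p p₀ h) ∧
    ∀ i j k : Fin 3,
      (∑ s : Fin 3, μDef ω q p p₀ s j k * Aiso ω q p p₀ h i s)
        = ∑ l : Fin 3, ∑ m : Fin 3,
            sl2ν i l m * Aiso ω q p p₀ h l j * Aiso ω q p p₀ h m k := by
  constructor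
  · rw [Matrix.isUnit_iff_isUnit_det, isUnit_iff_ne_zero]
    have hd : (Aiso ω q p p₀ h).det = h ^ 2 / p₀ ^ 2 := by
      simp [Aiso, Matrix.det_fin_three, Matrix.smul_apply]
      field_simp [left_ne_zero_of_mul hωq, right_ne_zero_of_mul hωq]
      ring
    rw [hd]
    exact div_ne_zero (pow_ne_zero 2 (ne_of_gt hh)) (pow_ne_zero 2 hp₀)
  · intro i j k
    have hω : ω ≠ 0 := left_ne_zero_of_mul hωq
    have hq : q ≠ 0 := right_ne_zero_of_mul hωq
    have key : h * h = p * p + (ω * q) * (ω * q) := by nlinarith [hh2]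
    fin_cases i <;> fin_cases j <;> fin_cases k <;>
      simp [Aiso, μDef, sl2ν, Fin.sum_univ_three, Matrix.smul_apply]
    all_goals try ring
    all_goals try norm_num [Matrix.vecHead, Matrix.vecTail]
    all_goals try (field_simp; ring)
    all_goals (rw [hh2]; ring)
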